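/- arXiv:1201.3995 — 2 statements merged into one kernel-verified Lean document; each statement's English description precedes it below -/
import Mathlib

section
/- The lca reconciliation is the pointwise minimum reconciliation: for any reconciliation f between a gene tree G and a species tree S, and any node u of G, λ(u) ≤_S f(u), where λ is the lca reconciliation. -/
/-- A finite rooted tree encoded by a parent function: the root is a fixed
point of `parent` and every node reaches the root by iterating `parent`. -/
structure PRTree where
  V : Type
  fintypeV : Fintype V
  root : V
  parent : V → V
  parent_root : parent root = root
  reaches_root : ∀ v : V, ∃ n : ℕ, parent^[n] v = root

namespace PRTree

variable (T : PRTree)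

/-- `anc v u` : `u` lies on the unique path from the root to `v`
(i.e. `u` is an ancestor of `v` or `u = v`); this is the order `v ≤ u`. -/
def anc (v u : T.V) : Prop := ∃ n : ℕ, T.parent^[n] v = u

/-- `c` is a child of `p`. -/
def childOf (c p : T.V) : Prop := T.parent c = p ∧ c ≠ p

/-- A leaf is a node with no children. -/
def IsLeaf (v : T.V) : Prop := ∀ c : T.V, ¬ T.childOf c v

/-- `x` is a common ancestor of the set `I`. -/
def commonAnc (I : Set T.V) (x : T.V) : Prop := ∀ y ∈ I, T.anc y x

/-- `x` is a least common ancestor of `I`: a common ancestor none of whose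
children is a common ancestor of `I`. -/
def isLCA (I : Set T.V) (x : T.V) : Prop :=
  T.commonAnc I x ∧ ∀ c : T.V, T.childOf c x → ¬ T.commonAnc I c

/-- The set of leaves lying below (or equal to) `u`. -/
def leafSet (u : T.V) : Set T.V := {x | T.IsLeaf x ∧ T.anc x u}

/-- Every internal node has either no children (leaf) or exactly two children. -/
def IsBinary : Prop :=
  ∀ v : T.V, T.IsLeaf v ∨
    ∃ c₁ c₂ : T.V, c₁ ≠ c₂ ∧ ∀ c : T.V, T.childOf c v ↔ (c = c₁ ∨ c = c₂)

end PRTree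

section Aux

variable {T : PRTree}

lemma anc_refl (v : T.V) : T.anc v v := ⟨0, rfl⟩

lemma anc_trans {a b c : T.V} (h1 : T.anc a b) (h2 : T.anc b c) : T.anc a c := by
  obtain ⟨n, hn⟩ := h1; obtain ⟨m, hm⟩ := h2
  exact ⟨m + n, by rw [Function.iterate_add_apply, hn, hm]⟩

lemma eq_root_of_cycle {x : T.V} {p : ℕ} (hp : 0 < p) (h : T.parent^[p] x = x) :
    x = T.root := by
  obtain ⟨k, hk⟩ := T.reaches_root x
  have hper : T.parent^[p * k] x = x := by
    rw [Function.iterate_mul]; exact Function.iterate_fixed h k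
  have hle : k ≤ p * k := Nat.le_mul_of_pos_left k hp
  have : T.parent^[p * k] x = T.root := by
    have : p * k = (p * k - k) + k := (Nat.sub_add_cancel hle).symm
    rw [this, Function.iterate_add_apply, hk,
      Function.iterate_fixed T.parent_root]
  rw [← hper, this]

lemma anc_antisymm {x y : T.V} (h1 : T.anc x y) (h2 : T.anc y x) : x = y := by
  obtain ⟨n, hn⟩ := h1; obtain ⟨m, hm⟩ := h2
  rcases Nat.eq_zero_or_pos (m + n) with h0 | hpos
  · obtain ⟨hm0, hn0⟩ := Nat.add_eq_zero.mp h0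
    subst hn0; exact hn
  · have hcx : T.parent^[m + n] x = x := by
      rw [Function.iterate_add_apply, hn, hm]
    have hcy : T.parent^[n + m] y = y := by
      rw [Function.iterate_add_apply, hm, hn]
    rw [eq_root_of_cycle hpos hcx, eq_root_of_cycle (by omega) hcy]

/-- Every node has a leaf (weakly) below it. -/
lemma exists_leaf_below (u : T.V) : ∃ x : T.V, T.IsLeaf x ∧ T.anc x u := by
  have : ∀ n : ℕ, ∀ u : T.V, Set.ncard {x | T.anc x u} ≤ n →
      ∃ x : T.V, T.IsLeaf x ∧ T.anc x u := by
    intro n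
    induction n with
    | zero =>
      intro u hu
      exfalso
      have hfin : {x | T.anc x u}.Finite := by have : Finite T.V := T.fintypeV.finite; exact Set.toFinite _
      have : u ∈ {x | T.anc x u} := anc_refl u
      have := Set.ncard_pos hfin |>.mpr ⟨u, this⟩
      omega
    | succ n ih =>
      intro u hu
      by_cases hl : T.IsLeaf u
      · exact ⟨u, hl, anc_refl u⟩
      · simp only [PRTree.IsLeaf, not_forall, not_not] at hl
        obtain ⟨c, hc⟩ := hl
        have hanc_cu : T.anc c u := ⟨1, hc.1⟩
        have hsub : {x | T.anc x c} ⊂ {x | T.anc x u} := by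
          constructor
          · intro x hx; exact anc_trans hx hanc_cu
          · intro hcon
            have : T.anc u c := hcon (anc_refl u)
            exact hc.2 (anc_antisymm hanc_cu this)
        have hfin : {x | T.anc x u}.Finite := by have : Finite T.V := T.fintypeV.finite; exact Set.toFinite _
        have hlt : Set.ncard {x | T.anc x c} < Set.ncard {x | T.anc x u} :=
          Set.ncard_lt_ncard hsub hfin
        obtain ⟨x, hx1, hx2⟩ := ih c (by omega)
        exact ⟨x, hx1, anc_trans hx2 hanc_cu⟩
  exact this _ u le_rfl

/-- The LCA is below any common ancestor reachable from it along iterates. -/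
lemma lca_anc_aux {I : Set T.V} {x : T.V} (hx : T.isLCA I x) :
    ∀ k : ℕ, ∀ z : T.V, T.parent^[k] z = x → T.commonAnc I z → T.anc x z := by
  intro k
  induction k with
  | zero => intro z hz _; exact hz ▸ anc_refl z
  | succ k ih =>
    intro z hz hcz
    set c := T.parent^[k] z with hc
    have hpc : T.parent c = x := by
      rw [hc, ← Function.iterate_succ_apply' T.parent k z, hz]
    have hcc : T.commonAnc I c := by
      intro y hy
      obtain ⟨j, hj⟩ := hcz y hy
      exact ⟨k + j, by rw [Function.iterate_add_apply, hj, ← hc]⟩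
    by_cases hce : c = x
    · exact ih z (by rw [← hc, hce]) hcz
    · exact absurd hcc (hx.2 c ⟨hpc, hce⟩)

lemma lca_le_commonAnc {I : Set T.V} {x z y : T.V} (hy : y ∈ I)
    (hx : T.isLCA I x) (hz : T.commonAnc I z) : T.anc x z := by
  obtain ⟨n, hn⟩ := hx.1 y hy
  obtain ⟨m, hm⟩ := hz y hy
  rcases le_or_gt n m with h | h
  · exact ⟨m - n, by rw [← hn, ← Function.iterate_add_apply,
      Nat.sub_add_cancel h, hm]⟩
  · have : T.parent^[n - m] z = x := by
      rw [← hm, ← Function.iterate_add_apply, Nat.sub_add_cancel h.le, hn]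
    exact lca_anc_aux hx (n - m) z this hz

end Aux

/-- The lca reconciliation is the pointwise minimum
reconciliation: for any reconciliation `f` (leaf-preserving and
order-preserving) between a gene tree `G` and a species tree `S`, and any node
`u` of `G`, `lam u ≤_S f u`, where `lam` is the lca reconciliation. -/
theorem stmt_4 (G S : PRTree) (lab : G.V → S.V)
    (hlab : ∀ x : G.V, G.IsLeaf x → S.IsLeaf (lab x))
    (lam : G.V → S.V)
    (hlam : ∀ u : G.V, S.isLCA (lab '' {x | G.IsLeaf x ∧ G.anc x u}) (lam u))
    (f : G.V → S.V)
    (hf1 : ∀ x : G.V, G.IsLeaf x → f x = lab x)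
    (hf2 : ∀ g g' : G.V, G.anc g' g → S.anc (f g') (f g)) :
    ∀ u : G.V, S.anc (lam u) (f u) := by
  intro u
  obtain ⟨x0, hx0l, hx0a⟩ := exists_leaf_below u
  have hmem : lab x0 ∈ lab '' {x | G.IsLeaf x ∧ G.anc x u} :=
    ⟨x0, ⟨hx0l, hx0a⟩, rfl⟩
  have hca : S.commonAnc (lab '' {x | G.IsLeaf x ∧ G.anc x u}) (f u) := by
    rintro y ⟨x, ⟨hxl, hxa⟩, rfl⟩
    have := hf2 u x hxa
    rwa [hf1 x hxl] at this
  exact lca_le_commonAnc hmem (hlam u) hca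
end

section
/- (Mirsky's theorem, dual of Dilworth) In a finite partially ordered set P, the minimum number of antichains into which P can be partitioned equals the maximum size of a chain in P. -/
open Classical in
noncomputable def hgt {α : Type} [Fintype α] [PartialOrder α] : α → ℕ :=
  (Finite.to_wellFoundedLT (α := α)).wf.fix
    (fun a ih => 1 + Finset.univ.sup (fun b => if hb : b < a then ih b hb else 0))

open Classical in
lemma hgt_eq {α : Type} [Fintype α] [PartialOrder α] (a : α) :
    hgt a = 1 + Finset.univ.sup (fun b => if _ : b < a then hgt b else 0) :=
  WellFounded.fix_eq _ _ a

variable {α : Type} [Fintype α] [PartialOrder α]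

lemma one_le_hgt (a : α) : 1 ≤ hgt a := by
  rw [hgt_eq]; exact Nat.le_add_right 1 _

lemma hgt_lt_hgt {a b : α} (h : b < a) : hgt b < hgt a := by
  classical
  rw [hgt_eq a]
  have := Finset.le_sup (f := fun b' => if _ : b' < a then hgt b' else 0) (Finset.mem_univ b)
  simp only [dif_pos h] at this
  omega

lemma exists_chain_hgt (a : α) : ∃ C : Finset α, IsChain (· ≤ ·) (C : Set α) ∧ a ∈ C ∧
    (∀ x ∈ C, x ≤ a) ∧ C.card = hgt a := by
  classical
  refine (Finite.to_wellFoundedLT (α := α)).wf.induction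
    (C := fun a => ∃ C : Finset α, IsChain (· ≤ ·) (C : Set α) ∧ a ∈ C ∧
      (∀ x ∈ C, x ≤ a) ∧ C.card = hgt a) a ?_
  intro a ih
  rw [hgt_eq a]
  set f : α → ℕ := fun b => if _ : b < a then hgt b else 0 with hf
  by_cases h0 : Finset.univ.sup f = 0
  · refine ⟨{a}, ?_, Finset.mem_singleton_self a, ?_, by simp [h0]⟩
    · simp [Set.Subsingleton.isChain]
    · intro x hx; rw [Finset.mem_singleton] at hx; exact hx.le
  · obtain ⟨b, -, hb⟩ := Finset.exists_mem_eq_sup Finset.univ ⟨a, Finset.mem_univ a⟩ f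
    by_cases hba : b < a
    · have hfb : f b = hgt b := dif_pos hba
      obtain ⟨C', hC', hbC', hle', hcard'⟩ := ih b hba
      have haC' : a ∉ C' := fun ha => absurd (hle' a ha) (not_le_of_gt hba)
      refine ⟨insert a C', ?_, Finset.mem_insert_self a C', ?_, ?_⟩
      · rw [Finset.coe_insert]
        exact hC'.insert (fun c hc _ => Or.inr ((hle' c hc).trans hba.le))
      · intro x hx
        rcases Finset.mem_insert.mp hx with h | h
        · exact h.le
        · exact (hle' x h).trans hba.le
      · rw [Finset.card_insert_of_notMem haC', hcard', ← hfb, ← hb]; omega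
    · exact absurd (hb ▸ dif_neg hba) h0

/-- Mirsky's theorem, dual of Dilworth: In a finite partially
ordered set, the minimum number of antichains into which the poset can be
partitioned equals the maximum size of a chain. -/
theorem stmt_8 (α : Type) [Fintype α] [PartialOrder α] [DecidableEq α] :
    sInf {n : ℕ | ∃ 𝒜 : Finset (Finset α), 𝒜.card = n ∧
        (∀ A ∈ 𝒜, IsAntichain (· ≤ ·) (A : Set α)) ∧
        (∀ a : α, ∃! A : Finset α, A ∈ 𝒜 ∧ a ∈ A)} =
    sSup {n : ℕ | ∃ C : Finset α, IsChain (· ≤ ·) (C : Set α) ∧ C.card = n} := by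
  classical
  set S := {n : ℕ | ∃ 𝒜 : Finset (Finset α), 𝒜.card = n ∧
        (∀ A ∈ 𝒜, IsAntichain (· ≤ ·) (A : Set α)) ∧
        (∀ a : α, ∃! A : Finset α, A ∈ 𝒜 ∧ a ∈ A)} with hS
  set T := {n : ℕ | ∃ C : Finset α, IsChain (· ≤ ·) (C : Set α) ∧ C.card = n} with hT
  set m := Finset.univ.sup (hgt : α → ℕ) with hm
  -- every chain has card ≤ m
  have chain_le : ∀ C : Finset α, IsChain (· ≤ ·) (C : Set α) → C.card ≤ m := by
    intro C hC
    have hinj : Set.InjOn hgt (C : Set α) := by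
      intro x hx y hy hxy
      by_contra hne
      rcases hC hx hy hne with h | h
      · exact absurd hxy (hgt_lt_hgt (lt_of_le_of_ne h hne)).ne
      · exact absurd hxy.symm (hgt_lt_hgt (lt_of_le_of_ne h (Ne.symm hne))).ne
    have : C.card = (C.image hgt).card := (Finset.card_image_of_injOn hinj).symm
    rw [this]
    have hsub : C.image hgt ⊆ Finset.Icc 1 m := by
      intro n hn
      obtain ⟨x, hx, rfl⟩ := Finset.mem_image.mp hn
      exact Finset.mem_Icc.mpr ⟨one_le_hgt x, Finset.le_sup (Finset.mem_univ x)⟩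
    calc (C.image hgt).card ≤ (Finset.Icc 1 m).card := Finset.card_le_card hsub
      _ = m := by rw [Nat.card_Icc]; omega
  -- m is attained by a chain
  have hmT : m ∈ T := by
    rcases Finset.univ.eq_empty_or_nonempty (α := α) with he | ⟨a, -⟩
    · refine ⟨∅, by simp, ?_⟩
      simp only [hm, he, Finset.sup_empty, Finset.card_empty]; rfl
    · obtain ⟨b, -, hb⟩ := Finset.exists_mem_eq_sup Finset.univ ⟨a, Finset.mem_univ a⟩ hgt
      obtain ⟨C, hC, -, -, hcard⟩ := exists_chain_hgt b
      exact ⟨C, hC, by rw [hcard, hm, hb]⟩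
  -- the level-set partition
  have hpart : ∃ n ∈ S, n ≤ m := by
    set 𝒜 : Finset (Finset α) :=
      (Finset.range m).image (fun i => Finset.univ.filter (fun x => hgt x = i + 1)) with h𝒜
    refine ⟨𝒜.card, ⟨𝒜, rfl, ?_, ?_⟩, le_trans Finset.card_image_le (by simp)⟩
    · intro A hA
      obtain ⟨i, -, rfl⟩ := Finset.mem_image.mp hA
      intro x hx y hy hne hle
      simp only [Finset.coe_filter, Set.mem_setOf_eq] at hx hy
      have hlt := hgt_lt_hgt (lt_of_le_of_ne hle hne)
      rw [hx.2, hy.2] at hlt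
      omega
    · intro a
      have h1 : 1 ≤ hgt a := one_le_hgt a
      have h2 : hgt a ≤ m := Finset.le_sup (Finset.mem_univ a)
      refine ⟨Finset.univ.filter (fun x => hgt x = hgt a), ⟨?_, by simp⟩, ?_⟩
      · refine Finset.mem_image.mpr ⟨hgt a - 1, Finset.mem_range.mpr (by omega), ?_⟩
        congr 1; ext x; constructor <;> intro h <;> omega
      · rintro A ⟨hA, haA⟩
        obtain ⟨i, -, rfl⟩ := Finset.mem_image.mp hA
        simp only [Finset.mem_filter] at haA
        rw [← haA.2]
  -- any partition size bounds any chain size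
  have key : ∀ n ∈ S, ∀ k ∈ T, k ≤ n := by
    rintro n ⟨𝒜, rfl, hanti, huniq⟩ k ⟨C, hC, rfl⟩
    have : ∀ c ∈ C, ∃ A ∈ 𝒜, c ∈ A := fun c _ => ((huniq c).exists).imp (fun A hA => ⟨hA.1, hA.2⟩)
    choose g hg1 hg2 using this
    refine Finset.card_le_card_of_injOn (fun c => if h : c ∈ C then g c h else ∅) ?_ ?_
    · intro c hc; simp only [Finset.mem_coe] at hc ⊢; simp only [dif_pos hc]; exact hg1 c hc
    · intro x hx y hy hxy
      simp only [Finset.mem_coe] at hx hy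
      simp only [dif_pos hx, dif_pos hy] at hxy
      by_contra hne
      rcases hC hx hy hne with h | h
      · exact hanti _ (hg1 x hx) (hg2 x hx) (hxy ▸ hg2 y hy) hne h
      · exact hanti _ (hg1 x hx) (hxy ▸ hg2 y hy) (hg2 x hx) (Ne.symm hne) h
  obtain ⟨n₀, hn₀S, hn₀m⟩ := hpart
  have hSne : S.Nonempty := ⟨n₀, hn₀S⟩
  have hTbdd : BddAbove T := ⟨m, fun k hk => by obtain ⟨C, hC, rfl⟩ := hk; exact chain_le C hC⟩
  have h1 : sInf S ≤ m := le_trans (Nat.sInf_le hn₀S) hn₀m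
  have h2 : m ≤ sSup T := le_csSup hTbdd hmT
  have h3 : sSup T ≤ sInf S := csSup_le ⟨m, hmT⟩ (fun k hk => key _ (Nat.sInf_mem hSne) _ hk)
  omega
end
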